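/- Fix integers n ≥ 2 and N ≥ 1, maps f : ℝ^(2n−1) × ℝ → ℝ and ĉ : ℝ × ℝ^(2n−1) → ℝ, and a dataset of triples (y_i⁺, ζ_i, u_i) ∈ ℝ × ℝ^(2n−1) × ℝ, i = 1,…,N. Suppose γ_u, γ_y : [0,∞) → [0,∞) satisfy, for every i and every ζ ∈ ℝ^(2n−1): |u_i − ĉ(y_i⁺, ζ)| ≤ γ_u(‖ζ_i − ζ‖) and |y_i⁺ − f(ζ, ĉ(y_i⁺, ζ))| ≤ γ_y(‖ζ_i − ζ‖). Then for every i and every ζ ∈ ℝ^(2n−1), ‖ζ_i⁺ − Φ(ζ, y_i⁺)‖ ≤ γ_u(‖ζ_i − ζ‖) + γ_y(‖ζ_i − ζ‖) + ‖ζ_i − ζ‖. -/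

import Mathlib

/-- The closed-loop one-step map with reference `yr`:
`Φ(ζ, yr) = (y₂,…,yₙ, f(ζ, ĉ(yr, ζ)), u₂,…,u_{n−1}, ĉ(yr, ζ))` for the augmented
state `ζ = (y₁,…,yₙ,u₁,…,u_{n−1}) ∈ ℝ^(2n−1)` (0-indexed coordinates). -/
noncomputable def Phi (n : ℕ) (f : EuclideanSpace ℝ (Fin (2*n-1)) → ℝ → ℝ)
    (chat : ℝ → EuclideanSpace ℝ (Fin (2*n-1)) → ℝ)
    (ζ : EuclideanSpace ℝ (Fin (2*n-1))) (yr : ℝ) : EuclideanSpace ℝ (Fin (2*n-1)) :=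
  WithLp.toLp 2 fun (k : Fin (2*n-1)) =>
    if (k : ℕ) = n - 1 then f ζ (chat yr ζ)
    else if h : (k : ℕ) = 2*n - 2 then chat yr ζ
    else ζ ⟨(k : ℕ) + 1, by have := k.isLt; omega⟩

/-- For a data triple `(y_i⁺, ζ_i, u_i)`, the shifted successor state
`ζ_i⁺ = (y_{i,2},…,y_{i,n}, y_i⁺, u_{i,2},…,u_{i,n−1}, u_i)`. -/
noncomputable def zplus (n : ℕ) (yp : ℝ) (ζ : EuclideanSpace ℝ (Fin (2*n-1))) (ui : ℝ) :
    EuclideanSpace ℝ (Fin (2*n-1)) :=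
  WithLp.toLp 2 fun (k : Fin (2*n-1)) =>
    if (k : ℕ) = n - 1 then yp
    else if h : (k : ℕ) = 2*n - 2 then ui
    else ζ ⟨(k : ℕ) + 1, by have := k.isLt; omega⟩

/-- Backward reachable set `R⁻(A) = {ζ : ∃ i, Φ(ζ, y_i⁺) ∈ A}`. -/
def Rminus (n N : ℕ) (f : EuclideanSpace ℝ (Fin (2*n-1)) → ℝ → ℝ)
    (chat : ℝ → EuclideanSpace ℝ (Fin (2*n-1)) → ℝ) (yd : Fin N → ℝ)
    (A : Set (EuclideanSpace ℝ (Fin (2*n-1)))) : Set (EuclideanSpace ℝ (Fin (2*n-1))) :=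
  {ζ | ∃ i : Fin N, Phi n f chat ζ (yd i) ∈ A}

/-- `S_δ = {ζ : |ζₙ| ≤ δ}` (the n-th coordinate is index `n-1`, 0-indexed). -/
def Sdelta (n : ℕ) (hn : 1 ≤ n) (δ : ℝ) : Set (EuclideanSpace ℝ (Fin (2*n-1))) :=
  {ζ | |ζ ⟨n - 1, by omega⟩| ≤ δ}

/-- Proposition 2: if the input and output errors are bounded by
`γ_u` and `γ_y`, then the augmented-state error is bounded by
`γ_u(‖ζ_i − ζ‖) + γ_y(‖ζ_i − ζ‖) + ‖ζ_i − ζ‖`. -/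
theorem stmt_2 (n N : ℕ) (hn : 2 ≤ n) (hN : 1 ≤ N)
    (f : EuclideanSpace ℝ (Fin (2*n-1)) → ℝ → ℝ)
    (chat : ℝ → EuclideanSpace ℝ (Fin (2*n-1)) → ℝ)
    (yd : Fin N → ℝ) (ζd : Fin N → EuclideanSpace ℝ (Fin (2*n-1))) (ud : Fin N → ℝ)
    (γu γy : ℝ → ℝ)
    (hγu_nonneg : ∀ s, 0 ≤ s → 0 ≤ γu s) (hγy_nonneg : ∀ s, 0 ≤ s → 0 ≤ γy s)
    (hγu : ∀ (i : Fin N) (ζ : EuclideanSpace ℝ (Fin (2*n-1))),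
      |ud i - chat (yd i) ζ| ≤ γu ‖ζd i - ζ‖)
    (hγy : ∀ (i : Fin N) (ζ : EuclideanSpace ℝ (Fin (2*n-1))),
      |yd i - f ζ (chat (yd i) ζ)| ≤ γy ‖ζd i - ζ‖) :
    ∀ (i : Fin N) (ζ : EuclideanSpace ℝ (Fin (2*n-1))),
      ‖zplus n (yd i) (ζd i) (ud i) - Phi n f chat ζ (yd i)‖ ≤
        γu ‖ζd i - ζ‖ + γy ‖ζd i - ζ‖ + ‖ζd i - ζ‖ := by

  intro i ζ
  have hn1 : n - 1 < 2*n-1 := by omega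
  have h2n : 2*n-2 < 2*n-1 := by omega
  have hmpos : 0 < 2*n-1 := by omega
  set w : EuclideanSpace ℝ (Fin (2*n-1)) := ζd i - ζ with hw
  set a : EuclideanSpace ℝ (Fin (2*n-1)) :=
    EuclideanSpace.single ⟨n-1, hn1⟩ (yd i - f ζ (chat (yd i) ζ)) with ha
  set b : EuclideanSpace ℝ (Fin (2*n-1)) :=
    EuclideanSpace.single ⟨2*n-2, h2n⟩ (ud i - chat (yd i) ζ) with hb
  set c : EuclideanSpace ℝ (Fin (2*n-1)) :=
    WithLp.toLp 2 (fun (k : Fin (2*n-1)) => if (k:ℕ) = n-1 then 0 else if h : (k:ℕ) = 2*n-2 then 0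
      else w ⟨(k:ℕ)+1, by have := k.isLt; omega⟩) with hc
  have hd : zplus n (yd i) (ζd i) (ud i) - Phi n f chat ζ (yd i) = a + b + c := by
    have hne : (n-1 : ℕ) ≠ 2*n-2 := by omega
    ext k
    simp only [PiLp.sub_apply, PiLp.add_apply, zplus, Phi, ha, hb, hc,
      EuclideanSpace.single_apply, Fin.mk.injEq, Fin.ext_iff]
    by_cases h1 : (k:ℕ) = n-1
    · have h2 : ¬ (k:ℕ) = 2*n-2 := by omega
      simp [h1, h2, hne]
    · by_cases h2 : (k:ℕ) = 2*n-2
      · simp [h1, h2, Ne.symm hne]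
      · simp [h1, h2, hw]
  have hna : ‖a‖ = |yd i - f ζ (chat (yd i) ζ)| := by
    rw [ha, EuclideanSpace.norm_single]; exact rfl
  have hnb : ‖b‖ = |ud i - chat (yd i) ζ| := by
    rw [hb, EuclideanSpace.norm_single]; exact rfl
  -- the rotation permutation
  let ρ : Equiv.Perm (Fin (2*n-1)) :=
    { toFun := fun k => ⟨((k:ℕ)+1) % (2*n-1), Nat.mod_lt _ hmpos⟩
      invFun := fun k => ⟨((k:ℕ)+(2*n-2)) % (2*n-1), Nat.mod_lt _ hmpos⟩
      left_inv := by
        intro k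
        apply Fin.ext
        show (((k:ℕ)+1) % (2*n-1) + (2*n-2)) % (2*n-1) = (k:ℕ)
        rw [Nat.mod_add_mod]
        have : (k:ℕ) + 1 + (2*n-2) = (k:ℕ) + (2*n-1) := by omega
        rw [this, Nat.add_mod_right]
        exact Nat.mod_eq_of_lt k.isLt
      right_inv := by
        intro k
        apply Fin.ext
        show (((k:ℕ)+(2*n-2)) % (2*n-1) + 1) % (2*n-1) = (k:ℕ)
        rw [Nat.mod_add_mod]
        have : (k:ℕ) + (2*n-2) + 1 = (k:ℕ) + (2*n-1) := by omega
        rw [this, Nat.add_mod_right]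
        exact Nat.mod_eq_of_lt k.isLt }
  have hnc : ‖c‖ ≤ ‖w‖ := by
    rw [EuclideanSpace.norm_eq, EuclideanSpace.norm_eq]
    apply Real.sqrt_le_sqrt
    have key : ∀ k ∈ Finset.univ, ‖c k‖^2 ≤ ‖w (ρ k)‖^2 := by
      intro k _
      by_cases h1 : (k:ℕ) = n-1
      · have hck : c k = 0 := by simp [hc, h1]
        simpa [hck] using sq_nonneg ‖w (ρ k)‖
      · by_cases h2 : (k:ℕ) = 2*n-2
        · have hck : c k = 0 := by simp [hc, h1, h2]
          simpa [hck] using sq_nonneg ‖w (ρ k)‖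
        · have hk : ((k:ℕ)+1) < 2*n-1 := by have := k.isLt; omega
          have hρ : ρ k = ⟨(k:ℕ)+1, hk⟩ := by
            apply Fin.ext
            show ((k:ℕ)+1) % (2*n-1) = (k:ℕ)+1
            exact Nat.mod_eq_of_lt hk
          rw [hρ]
          simp [hc, h1, h2]
    calc ∑ k, ‖c k‖^2 ≤ ∑ k, ‖w (ρ k)‖^2 := Finset.sum_le_sum key
      _ = ∑ j, ‖w j‖^2 := Equiv.sum_comp ρ (fun j => ‖w j‖ ^ 2)
  calc ‖zplus n (yd i) (ζd i) (ud i) - Phi n f chat ζ (yd i)‖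
      = ‖a + b + c‖ := by rw [hd]
    _ ≤ ‖a‖ + ‖b‖ + ‖c‖ := norm_add₃_le
    _ ≤ γy ‖ζd i - ζ‖ + γu ‖ζd i - ζ‖ + ‖ζd i - ζ‖ := by
        rw [hna, hnb]
        have h1 := hγy i ζ
        have h2 := hγu i ζ
        have h3 : ‖w‖ = ‖ζd i - ζ‖ := by rw [hw]
        linarith [hnc]
    _ = γu ‖ζd i - ζ‖ + γy ‖ζd i - ζ‖ + ‖ζd i - ζ‖ := by ring
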